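/- Let A be an S-ring over a finite abelian group G, p a prime dividing |G|, and H = {g ∈ G : g^p = e}. Then for every A-set X, the set X^{[p]} = {x^p : x ∈ X and |X ∩ Hx| ≢ 0 (mod p)} is an A-set. -/

import Mathlib

open scoped BigOperators Pointwise Classical

noncomputable section

/-- The group-ring element `X̄ = Σ_{x∈X} x` in `ℤG`. -/
def ind {G : Type*} [Group G] (X : Finset G) : MonoidAlgebra ℤ G :=
  ∑ x ∈ X, MonoidAlgebra.single x 1

/-- The ℤ-span of the class sums of the members of `S`. -/
def spanA {G : Type*} [Group G] (S : Finset (Finset G)) :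
    Submodule ℤ (MonoidAlgebra ℤ G) :=
  Submodule.span ℤ (ind '' (S : Set (Finset G)))

/-- `S` is the partition of basic sets of an S-ring over `G`. -/
structure IsSRing {G : Type*} [Group G] (S : Finset (Finset G)) : Prop where
  cover : ∀ g : G, ∃ X ∈ S, g ∈ X
  disj : ∀ X ∈ S, ∀ Y ∈ S, X ≠ Y → Disjoint X Y
  nonempty : ∀ X ∈ S, X.Nonempty
  one_mem : ({1} : Finset G) ∈ S
  inv_mem : ∀ X ∈ S, X.image (·⁻¹) ∈ S
  mul_closed : ∀ a ∈ spanA S, ∀ b ∈ spanA S, a * b ∈ spanA S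

/-- `X` is an `A`-set: its class sum lies in the span of the basic class sums. -/
def IsASet {G : Type*} [Group G] (S : Finset (Finset G)) (X : Finset G) : Prop :=
  ind X ∈ spanA S

/-- The finset underlying a subgroup of a finite group. -/
def subgroupFinset {G : Type*} [Group G] [Fintype G] (H : Subgroup G) : Finset G :=
  Finset.univ.filter (· ∈ H)

/-- `H` is an `A`-subgroup. -/
def IsASubgroup {G : Type*} [Group G] [Fintype G] (S : Finset (Finset G))
    (H : Subgroup G) : Prop :=
  IsASet S (subgroupFinset H)

/-- The radical `rad(X) = {g : gX = Xg = X}` as a subgroup. -/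
def radSubgroup {G : Type*} [Group G] (X : Finset G) : Subgroup G where
  carrier := {g : G | X.image (g * ·) = X ∧ X.image (· * g) = X}
  one_mem' := by
    constructor <;> · simp only [one_mul, mul_one]; exact Finset.image_id
  mul_mem' := by
    rintro a b ⟨ha1, ha2⟩ ⟨hb1, hb2⟩
    constructor
    · have : X.image (a * b * ·) = (X.image (b * ·)).image (a * ·) := by
        rw [Finset.image_image]
        exact Finset.image_congr (fun x _ => by simp [mul_assoc])
      rw [this, hb1, ha1]
    · have : X.image (· * (a * b)) = (X.image (· * a)).image (· * b) := by
        rw [Finset.image_image]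
        exact Finset.image_congr (fun x _ => by simp [mul_assoc])
      rw [this, ha2, hb2]
  inv_mem' := by
    rintro a ⟨ha1, ha2⟩
    constructor
    · have := congrArg (Finset.image (a⁻¹ * ·)) ha1
      rw [Finset.image_image] at this
      have h2 : X.image ((a⁻¹ * ·) ∘ (a * ·)) = X := by
        rw [show ((a⁻¹ * ·) ∘ (a * ·)) = id by funext x; simp, Finset.image_id]
      rw [← this, h2]
    · have := congrArg (Finset.image (· * a⁻¹)) ha2
      rw [Finset.image_image] at this
      have h2 : X.image ((· * a⁻¹) ∘ (· * a)) = X := by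
        rw [show ((· * a⁻¹) ∘ (· * a)) = id by funext x; simp, Finset.image_id]
      rw [← this, h2]

end

section Aux
variable {G : Type*}

lemma ind_apply [Group G] (X : Finset G) (g : G) :
    (ind X).coeff g = if g ∈ X then 1 else 0 := by
  classical
  unfold ind
  rw [MonoidAlgebra.coeff_sum, Finset.sum_apply']
  simp [MonoidAlgebra.coeff_single, Finsupp.single_apply, Finset.sum_ite_eq]

lemma count_apply [Group G] (X : Finset G) (f : G → G) (g : G) :
    (∑ x ∈ X, MonoidAlgebra.single (f x) (1:ℤ)).coeff g
      = (X.filter (fun x => f x = g)).card := by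
  classical
  rw [MonoidAlgebra.coeff_sum, Finset.sum_apply']
  simp only [MonoidAlgebra.coeff_single, Finsupp.single_apply]
  rw [Finset.sum_ite, Finset.sum_const, Finset.sum_const]
  simp

/-- Every element of the S-ring has constant coefficients on each basic set. -/
lemma const_on_basic [Group G] (S : Finset (Finset G)) (hS : IsSRing S)
    {a : MonoidAlgebra ℤ G} (ha : a ∈ spanA S) :
    ∀ T ∈ S, ∀ x ∈ T, ∀ y ∈ T, a.coeff x = a.coeff y := by
  induction ha using Submodule.span_induction with
  | mem b hb =>
    intro T hT x hx y hy
    obtain ⟨T', hT', rfl⟩ := hb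
    rw [ind_apply, ind_apply]
    rcases eq_or_ne T T' with rfl | hne
    · simp [hx, hy]
    · have hd := hS.disj T hT T' hT' hne
      rw [if_neg (Finset.disjoint_left.mp hd hx), if_neg (Finset.disjoint_left.mp hd hy)]
  | zero => intro T hT x hx y hy; rfl
  | add b c hb hc ihb ihc =>
    intro T hT x hx y hy
    have : (b + c).coeff x = b.coeff x + c.coeff x := rfl
    rw [this, show (b + c).coeff y = b.coeff y + c.coeff y from rfl, ihb T hT x hx y hy,
      ihc T hT x hx y hy]
  | smul r b hb ih =>
    intro T hT x hx y hy
    have h1 : (r • b).coeff x = r • b.coeff x := rfl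
    rw [h1, show (r • b).coeff y = r • b.coeff y from rfl, ih T hT x hx y hy]

/-- The set of group elements whose coefficient is not divisible by `p` is an
`A`-set. -/
lemma filter_ndvd_isASet [Group G] [Fintype G] (S : Finset (Finset G))
    (hS : IsSRing S) (p : ℕ) {a : MonoidAlgebra ℤ G} (ha : a ∈ spanA S) :
    IsASet S (Finset.univ.filter (fun g => ¬ (p:ℤ) ∣ a.coeff g)) := by
  classical
  set U : Finset G := Finset.univ.filter (fun g => ¬ (p:ℤ) ∣ a.coeff g) with hU
  set S' : Finset (Finset G) := S.filter (fun T => ∃ g ∈ T, ¬ (p:ℤ) ∣ a.coeff g) with hS'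
  have key : ind U = ∑ T ∈ S', ind T := by
    apply MonoidAlgebra.ext
    apply Finsupp.ext
    intro g
    have hsum : (∑ T ∈ S', ind T).coeff g = ∑ T ∈ S', (ind T).coeff g := by
      rw [MonoidAlgebra.coeff_sum, Finset.sum_apply']
    rw [hsum, ind_apply]
    obtain ⟨T₀, hT₀S, hgT₀⟩ := hS.cover g
    by_cases hdvd : (p:ℤ) ∣ a.coeff g
    · rw [if_neg (by simp [hU, hdvd])]
      refine (Finset.sum_eq_zero ?_).symm
      intro T hT
      rw [ind_apply, if_neg]
      intro hgT
      have hTS := (Finset.mem_filter.mp hT).1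
      obtain ⟨g', hg', hdg'⟩ := (Finset.mem_filter.mp hT).2
      exact hdg' (by rw [const_on_basic S hS ha T hTS g' hg' g hgT]; exact hdvd)
    · rw [if_pos (by simp [hU, hdvd])]
      have hT₀S' : T₀ ∈ S' := Finset.mem_filter.mpr ⟨hT₀S, g, hgT₀, hdvd⟩
      rw [Finset.sum_eq_single T₀ (fun T hT hne => by
          rw [ind_apply, if_neg]
          intro hgT
          exact (Finset.disjoint_left.mp
            (hS.disj T (Finset.mem_filter.mp hT).1 T₀ hT₀S hne) hgT) hgT₀)
        (fun h => (h hT₀S').elim)]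
      rw [ind_apply, if_pos hgT₀]
  rw [IsASet, key]
  exact Submodule.sum_mem _ (fun T hT => Submodule.subset_span
    ⟨T, (Finset.mem_filter.mp hT).1, rfl⟩)

lemma pow_mem_spanA [Group G] (S : Finset (Finset G)) (hS : IsSRing S)
    {a : MonoidAlgebra ℤ G} (ha : a ∈ spanA S) (n : ℕ) : a ^ n ∈ spanA S := by
  induction n with
  | zero =>
    rw [pow_zero]
    have h1 : (1 : MonoidAlgebra ℤ G) = ind ({1} : Finset G) := by
      rw [MonoidAlgebra.one_def]; simp [ind]
    rw [h1]
    exact Submodule.subset_span ⟨{1}, hS.one_mem, rfl⟩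
  | succ n ih => rw [pow_succ]; exact hS.mul_closed _ ih _ ha

end Aux

section Frob
variable {G : Type*} [CommGroup G] (p : ℕ) [Fact p.Prime]

instance charP_MA : CharP (MonoidAlgebra (ZMod p) G) p :=
  charP_of_injective_ringHom
    (f := (MonoidAlgebra.singleOneRingHom : ZMod p →+* MonoidAlgebra (ZMod p) G))
    (fun x y h => by simpa using h) p

/-- Reduction mod `p` of the integral group algebra. -/
noncomputable def phi : MonoidAlgebra ℤ G →ₐ[ℤ] MonoidAlgebra (ZMod p) G :=
  MonoidAlgebra.lift ℤ (MonoidAlgebra (ZMod p) G) G (MonoidAlgebra.of (ZMod p) G)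

lemma phi_single (a : G) (b : ℤ) :
    phi p (MonoidAlgebra.single a b) = MonoidAlgebra.single a (b : ZMod p) := by
  rw [phi, MonoidAlgebra.lift_single, MonoidAlgebra.of_apply]
  rw [MonoidAlgebra.smul_single, zsmul_one]

lemma phi_apply (x : MonoidAlgebra ℤ G) (g : G) :
    (phi p x).coeff g = ((x.coeff g : ℤ) : ZMod p) := by
  induction x using MonoidAlgebra.induction_linear with
  | zero => simp
  | add f g' hf hg =>
    rw [map_add]
    have : ∀ (u v : MonoidAlgebra (ZMod p) G), (u + v).coeff g = u.coeff g + v.coeff g := fun _ _ => rfl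
    rw [this, hf, hg, show ((f + g').coeff g : ℤ) = f.coeff g + g'.coeff g from rfl, Int.cast_add]
  | single a b =>
    rw [phi_single]
    show (Finsupp.single a ((b : ZMod p))) g = ((Finsupp.single a b g : ℤ) : ZMod p)
    rw [Finsupp.single_apply, Finsupp.single_apply]
    split <;> simp

lemma frob_coeff (X : Finset G) (g : G) :
    (((ind X ^ p).coeff g : ℤ) : ZMod p)
      = (((∑ x ∈ X, MonoidAlgebra.single (x ^ p) (1:ℤ)).coeff g : ℤ) : ZMod p) := by
  rw [← phi_apply, ← phi_apply]
  have h1 : phi p (ind X) = ∑ x ∈ X, MonoidAlgebra.single x ((1:ℤ) : ZMod p) := by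
    rw [ind, map_sum]
    exact Finset.sum_congr rfl (fun x _ => phi_single p x 1)
  have h2 : (∑ x ∈ X, MonoidAlgebra.single x ((1:ℤ) : ZMod p)) ^ p
      = ∑ x ∈ X, MonoidAlgebra.single (x ^ p) ((1:ℤ) : ZMod p) := by
    rw [sum_pow_char]
    exact Finset.sum_congr rfl fun x _ => by
      rw [MonoidAlgebra.single_pow]; norm_num
  have key : phi p (ind X ^ p)
      = phi p (∑ x ∈ X, MonoidAlgebra.single (x ^ p) (1:ℤ)) := by
    rw [map_pow, h1, h2, map_sum]
    exact Finset.sum_congr rfl fun x _ => (phi_single p (x ^ p) 1).symm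
  rw [key]

end Frob


/-- Schur's second multiplier theorem: with
`H = {g : g^p = 1}`, for every `A`-set `X` the set
`X^{[p]} = {x^p : x ∈ X, |X ∩ Hx| ≢ 0 (mod p)}` is an `A`-set. -/
theorem stmt6 {G : Type*} [CommGroup G] [Fintype G] (S : Finset (Finset G))
    (hS : IsSRing S) (p : ℕ) (hp : p.Prime) (hdvd : p ∣ Fintype.card G)
    (X : Finset G) (hX : IsASet S X) :
    IsASet S
      ((X.filter (fun x =>
        ¬ p ∣ (X ∩ (Finset.univ.filter (fun h : G => h ^ p = 1)).image (· * x)).card)).image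
        (· ^ p)) := by
    classical
  haveI : Fact p.Prime := ⟨hp⟩
  set a := ind X ^ p with ha_def
  have haS : a ∈ spanA S := pow_mem_spanA S hS hX p
  -- `X ∩ Hx` is the set of elements of `X` with the same `p`-th power as `x`
  have hint : ∀ x : G,
      X ∩ (Finset.univ.filter (fun h : G => h ^ p = 1)).image (· * x)
        = X.filter (fun y => y ^ p = x ^ p) := by
    intro x
    ext y
    simp only [Finset.mem_inter, Finset.mem_filter, Finset.mem_image,
      Finset.mem_univ, true_and]
    constructor
    · rintro ⟨hyX, h, hh, rfl⟩
      exact ⟨hyX, by rw [mul_pow, hh, one_mul]⟩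
    · rintro ⟨hyX, hy⟩
      refine ⟨hyX, y * x⁻¹, ?_, by group⟩
      rw [mul_pow, hy, inv_pow, mul_inv_cancel]
  -- the mod-`p` congruence between coefficients of `a` and counting functions
  have hcong : ∀ g : G,
      ((p:ℤ) ∣ a.coeff g ↔ p ∣ (X.filter (fun y => y ^ p = g)).card) := by
    intro g
    have h1 := frob_coeff p X g
    rw [count_apply] at h1
    rw [← ZMod.intCast_zmod_eq_zero_iff_dvd, h1, Int.cast_natCast,
      ZMod.natCast_eq_zero_iff]
  have hset : (X.filter (fun x =>
        ¬ p ∣ (X ∩ (Finset.univ.filter (fun h : G => h ^ p = 1)).image (· * x)).card)).image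
        (· ^ p) = Finset.univ.filter (fun g => ¬ (p:ℤ) ∣ a.coeff g) := by
    ext g
    simp only [Finset.mem_image, Finset.mem_filter, Finset.mem_univ, true_and]
    constructor
    · rintro ⟨x, ⟨hxX, hx⟩, rfl⟩
      rw [hint x] at hx
      exact fun hd => hx ((hcong (x ^ p)).mp hd)
    · intro hg
      have hN : ¬ p ∣ (X.filter (fun y => y ^ p = g)).card :=
        fun hd => hg ((hcong g).mpr hd)
      have hne : (X.filter (fun y => y ^ p = g)).Nonempty := by
        rw [Finset.nonempty_iff_ne_empty]
        intro hemp
        apply hN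
        rw [hemp, Finset.card_empty]
        exact dvd_zero p
      obtain ⟨x, hx⟩ := hne
      have hxX := (Finset.mem_filter.mp hx).1
      have hxp : x ^ p = g := (Finset.mem_filter.mp hx).2
      refine ⟨x, ⟨hxX, ?_⟩, hxp⟩
      rw [hint x, hxp]
      exact hN
  rw [IsASet, hset]
  exact filter_ndvd_isASet S hS p haS
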